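/- Let M: ℝ^d → ℝ^d be the block-diagonal linear map M(z) = (A(Pz), C(Qz)), where A is an invertible k×k matrix with 1/‖A⁻¹‖ > 1 and C is a (d−k)×(d−k) matrix with operator norm ‖C‖ < 1/‖A⁻¹‖. Then there exist constants α > 0, K > 1 and δ > 0 such that every C¹ map F̂: ℝ^d → ℝ^d with sup_{z∈ℝ^d} ‖DF̂(z) − M‖ ≤ δ has an invariant expanding cone structure with constants α and K centered on the first k coordinate directions. In particular, the existence of an invariant expanding cone structure is an open condition in the C¹ topology. -/

import Mathlib

open Filter Topology

noncomputable section

/-- Projection onto the first `k` coordinates of `ℝ^d`. -/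
def projP (d k : ℕ) (h : k ≤ d) (z : EuclideanSpace ℝ (Fin d)) :
    EuclideanSpace ℝ (Fin k) :=
  WithLp.toLp 2 (fun i => z (Fin.castLE h i))

/-- Projection onto the last `d - k` coordinates of `ℝ^d`. -/
def projQ (d k : ℕ) (h : k ≤ d) (z : EuclideanSpace ℝ (Fin d)) :
    EuclideanSpace ℝ (Fin (d - k)) :=
  WithLp.toLp 2 (fun j => z ⟨k + j.val, by have := j.isLt; omega⟩)

lemma projP_add (d k : ℕ) (h : k ≤ d) (x y : EuclideanSpace ℝ (Fin d)) :
    projP d k h (x + y) = projP d k h x + projP d k h y := rfl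

lemma projQ_add (d k : ℕ) (h : k ≤ d) (x y : EuclideanSpace ℝ (Fin d)) :
    projQ d k h (x + y) = projQ d k h x + projQ d k h y := rfl

lemma sum_split (d k : ℕ) (h : k ≤ d) (f : Fin d → ℝ) :
    ∑ i, f i = (∑ i : Fin k, f (Fin.castLE h i)) +
      ∑ j : Fin (d - k), f ⟨k + j.1, by omega⟩ := by
  rw [← Equiv.sum_comp (finSumFinEquiv.trans (finCongr (by omega : k + (d - k) = d))) f,
    Fintype.sum_sum_type]
  congr 1

lemma norm_sq_decomp (d k : ℕ) (h : k ≤ d) (v : EuclideanSpace ℝ (Fin d)) :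
    ‖v‖ ^ 2 = ‖projP d k h v‖ ^ 2 + ‖projQ d k h v‖ ^ 2 := by
  rw [EuclideanSpace.norm_eq, EuclideanSpace.norm_eq, EuclideanSpace.norm_eq,
      Real.sq_sqrt (by positivity), Real.sq_sqrt (by positivity),
      Real.sq_sqrt (by positivity)]
  exact sum_split d k h (fun i => ‖v i‖ ^ 2)

lemma norm_projP_le (d k : ℕ) (h : k ≤ d) (v : EuclideanSpace ℝ (Fin d)) :
    ‖projP d k h v‖ ≤ ‖v‖ := by
  nlinarith [norm_sq_decomp d k h v, norm_nonneg v, norm_nonneg (projP d k h v),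
    sq_nonneg ‖projQ d k h v‖]

lemma norm_le_projs (d k : ℕ) (h : k ≤ d) (v : EuclideanSpace ℝ (Fin d)) :
    ‖v‖ ≤ ‖projP d k h v‖ + ‖projQ d k h v‖ := by
  nlinarith [norm_sq_decomp d k h v, norm_nonneg v, norm_nonneg (projP d k h v),
    norm_nonneg (projQ d k h v)]


lemma cone_arith (nC aa dd pp qq pp' : ℝ) (h0 : 0 ≤ nC) (hp : 0 ≤ pp)
    (hd : 0 < dd) (h1 : dd ≤ (aa - 1) / 4) (h2 : dd ≤ (aa - nC) / 8)
    (hlow : aa * pp - dd * (2 * pp) ≤ pp') (hhigh : qq ≤ nC * pp + dd * (2 * pp)) :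
    qq ≤ 1 * pp' ∧ (aa + 1) / 2 * pp ≤ pp' := by
  constructor <;>
    nlinarith [mul_nonneg (show (0:ℝ) ≤ aa - nC - 4 * dd by linarith) hp,
      mul_nonneg (show (0:ℝ) ≤ (aa - 1) / 2 - 2 * dd by linarith) hp]

/--
Let `M : ℝ^d → ℝ^d` be the block-diagonal linear map
`M(z) = (A(Pz), C(Qz))`, where `A` is an invertible `k×k` matrix with `1/‖A⁻¹‖ > 1` and
`C` is a `(d−k)×(d−k)` matrix with operator norm `‖C‖ < 1/‖A⁻¹‖`. Then there exist
constants `α > 0`, `K > 1` and `δ > 0` such that every C¹ map `F̂ : ℝ^d → ℝ^d` with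
`sup_z ‖DF̂(z) − M‖ ≤ δ` has an invariant expanding cone structure with constants `α` and
`K` centered on the first `k` coordinate directions. In particular the existence of an
invariant expanding cone structure is an open condition in the C¹ topology.
-/
theorem stmt18 (d k : ℕ) (hk : 1 ≤ k) (hkd : k ≤ d)
    (A : EuclideanSpace ℝ (Fin k) ≃L[ℝ] EuclideanSpace ℝ (Fin k))
    (hA : 1 < 1 / ‖(A.symm : EuclideanSpace ℝ (Fin k) →L[ℝ] EuclideanSpace ℝ (Fin k))‖)
    (C : EuclideanSpace ℝ (Fin (d - k)) →L[ℝ] EuclideanSpace ℝ (Fin (d - k)))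
    (hC : ‖C‖ < 1 / ‖(A.symm : EuclideanSpace ℝ (Fin k) →L[ℝ] EuclideanSpace ℝ (Fin k))‖)
    (M : EuclideanSpace ℝ (Fin d) →L[ℝ] EuclideanSpace ℝ (Fin d))
    (hM : ∀ z : EuclideanSpace ℝ (Fin d),
      projP d k hkd (M z) = A (projP d k hkd z) ∧
      projQ d k hkd (M z) = C (projQ d k hkd z)) :
    ∃ α > (0 : ℝ), ∃ K > (1 : ℝ), ∃ δ > (0 : ℝ),
      ∀ (F : EuclideanSpace ℝ (Fin d) → EuclideanSpace ℝ (Fin d))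
        (F' : EuclideanSpace ℝ (Fin d) →
          (EuclideanSpace ℝ (Fin d) →L[ℝ] EuclideanSpace ℝ (Fin d))),
        (∀ z, HasFDerivAt F (F' z) z) → Continuous F' →
        (∀ z, ‖F' z - M‖ ≤ δ) →
        ∀ (z v : EuclideanSpace ℝ (Fin d)),
          ‖projQ d k hkd v‖ ≤ α * ‖projP d k hkd v‖ →
            ‖projQ d k hkd (F' z v)‖ ≤ α * ‖projP d k hkd (F' z v)‖ ∧
            K * ‖projP d k hkd v‖ ≤ ‖projP d k hkd (F' z v)‖ := by
  set T := (A.symm : EuclideanSpace ℝ (Fin k) →L[ℝ] EuclideanSpace ℝ (Fin k)) with hT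
  set a := 1 / ‖T‖ with ha
  have hTpos : 0 < ‖T‖ := by
    rcases (norm_nonneg T).lt_or_eq with h | h
    · exact h
    · exfalso; rw [ha, ← h, div_zero] at hA; linarith
  have ha1 : 1 < a := hA
  have hCa : ‖C‖ < a := hC
  have hC0 : 0 ≤ ‖C‖ := norm_nonneg _
  have hAexp : ∀ x : EuclideanSpace ℝ (Fin k), a * ‖x‖ ≤ ‖A x‖ := by
    intro x
    have h1 : ‖x‖ ≤ ‖T‖ * ‖A x‖ := by
      calc ‖x‖ = ‖A.symm (A x)‖ := by simp
        _ ≤ ‖T‖ * ‖A x‖ := T.le_opNorm _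
    rw [ha, div_mul_eq_mul_div, one_mul, div_le_iff₀ hTpos, mul_comm]
    exact h1
  set δ := min ((a - 1) / 4) ((a - ‖C‖) / 8) with hδdef
  have hδpos : 0 < δ := lt_min (by linarith) (by linarith)
  have hδ1 : δ ≤ (a - 1) / 4 := min_le_left _ _
  have hδ2 : δ ≤ (a - ‖C‖) / 8 := min_le_right _ _
  refine ⟨1, one_pos, (a + 1) / 2, by linarith, δ, hδpos, ?_⟩
  intro F F' _ _ hFδ z v hcone
  set E := F' z - M with hE
  have hEnorm : ‖E‖ ≤ δ := hFδ z
  have hv' : F' z v = M v + E v := by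
    rw [hE, ContinuousLinearMap.sub_apply]; abel
  set p := ‖projP d k hkd v‖ with hp
  set q := ‖projQ d k hkd v‖ with hq
  have hp0 : 0 ≤ p := norm_nonneg _
  have hqp : q ≤ p := by simpa using hcone
  have hvle : ‖v‖ ≤ 2 * p := by
    have := norm_le_projs d k hkd v
    linarith
  have hEv : ‖E v‖ ≤ δ * (2 * p) := by
    calc ‖E v‖ ≤ ‖E‖ * ‖v‖ := E.le_opNorm v
      _ ≤ δ * (2 * p) := by
          apply mul_le_mul hEnorm hvle (norm_nonneg v) (le_of_lt hδpos)
  have hPsplit : projP d k hkd (F' z v) = A (projP d k hkd v) + projP d k hkd (E v) := by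
    rw [hv', projP_add, (hM v).1]
  have hQsplit : projQ d k hkd (F' z v) = C (projQ d k hkd v) + projQ d k hkd (E v) := by
    rw [hv', projQ_add, (hM v).2]
  have hPEv : ‖projP d k hkd (E v)‖ ≤ δ * (2 * p) :=
    (norm_projP_le d k hkd (E v)).trans hEv
  have hQEv : ‖projQ d k hkd (E v)‖ ≤ δ * (2 * p) := by
    have h1 := norm_le_projs d k hkd (E v)
    have h2 := norm_projP_le d k hkd (E v)
    nlinarith [norm_sq_decomp d k hkd (E v), norm_nonneg (E v),
      norm_nonneg (projQ d k hkd (E v))]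
  have hPlow : a * p - δ * (2 * p) ≤ ‖projP d k hkd (F' z v)‖ := by
    have h1 : ‖A (projP d k hkd v)‖ ≤
        ‖A (projP d k hkd v) + projP d k hkd (E v)‖ + ‖projP d k hkd (E v)‖ := by
      calc ‖A (projP d k hkd v)‖
          = ‖(A (projP d k hkd v) + projP d k hkd (E v)) - projP d k hkd (E v)‖ := by
            rw [add_sub_cancel_right]
        _ ≤ _ := norm_sub_le _ _
    have h2 := hAexp (projP d k hkd v)
    rw [hPsplit]
    linarith
  have hQhigh : ‖projQ d k hkd (F' z v)‖ ≤ ‖C‖ * p + δ * (2 * p) := by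
    rw [hQsplit]
    calc ‖C (projQ d k hkd v) + projQ d k hkd (E v)‖
        ≤ ‖C (projQ d k hkd v)‖ + ‖projQ d k hkd (E v)‖ := norm_add_le _ _
      _ ≤ ‖C‖ * p + δ * (2 * p) := by
          have := C.le_opNorm (projQ d k hkd v)
          have : ‖C (projQ d k hkd v)‖ ≤ ‖C‖ * p := this.trans (by nlinarith)
          linarith [hQEv]
  exact cone_arith ‖C‖ a δ p ‖projQ d k hkd (F' z v)‖ ‖projP d k hkd (F' z v)‖
    hC0 hp0 hδpos hδ1 hδ2 hPlow hQhigh
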